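/- Let K = B × C ⊆ ℝ^p × ℝ^q be a box, where B = ×_{i=1}^p [a_i, b_i] ⊆ ℝ^p and C = ×_{j=1}^q [a_{p+j}, b_{p+j}] ⊆ ℝ^q with a_ℓ ∈ ℝ ∪ {−∞}, b_ℓ ∈ ℝ ∪ {+∞}, a_ℓ < b_ℓ (C nonempty and closed), and let L be the extended Lorentz cone in ℝ^p × ℝ^q. Then the projection P_K is L-isotone if and only if B = ℝ^p (i.e., a_i = −∞ and b_i = +∞ for all i = 1,…,p). -/

import Mathlib

/-- The extended Lorentz cone `L = {(x,u) ∈ ℝ^p × ℝ^q : x ≥ ‖u‖e}`. -/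
def extendedLorentzCone (p q : ℕ) :
    Set (EuclideanSpace ℝ (Fin p) × EuclideanSpace ℝ (Fin q)) :=
  {z | ∀ i, ‖z.2‖ ≤ z.1 i}

/-- `P` is the metric projection onto `K ⊆ ℝ^p × ℝ^q` for the Euclidean
distance of `ℝ^{p+q}` (expressed with squared distances). -/
def IsMetricProjection {p q : ℕ}
    (K : Set (EuclideanSpace ℝ (Fin p) × EuclideanSpace ℝ (Fin q)))
    (P : EuclideanSpace ℝ (Fin p) × EuclideanSpace ℝ (Fin q) →
      EuclideanSpace ℝ (Fin p) × EuclideanSpace ℝ (Fin q)) : Prop :=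
  ∀ z, P z ∈ K ∧ ∀ w ∈ K,
    ‖z.1 - (P z).1‖ ^ 2 + ‖z.2 - (P z).2‖ ^ 2 ≤ ‖z.1 - w.1‖ ^ 2 + ‖z.2 - w.2‖ ^ 2


open RealInnerProductSpace

lemma euc_norm_sq {n : ℕ} (x : EuclideanSpace ℝ (Fin n)) : ‖x‖^2 = ∑ i, (x i)^2 := by
  rw [EuclideanSpace.norm_eq, Real.sq_sqrt (by positivity)]
  simp [sq_abs]

lemma exists_two (c d : EReal) (hc : c ≠ ⊤) (hd : d ≠ ⊥) (hcd : c < d) :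
    ∃ r r' : ℝ, r < r' ∧ c ≤ (r : EReal) ∧ (r' : EReal) ≤ d := by
  by_cases hcb : c = ⊥
  · by_cases hdt : d = ⊤
    · exact ⟨0, 1, by norm_num, by simp [hcb], by simp [hdt]⟩
    · have hdd : ((d.toReal : ℝ) : EReal) = d := EReal.coe_toReal hdt hd
      exact ⟨d.toReal - 1, d.toReal, by linarith, by simp [hcb], hdd.le⟩
  · have hcc : ((c.toReal : ℝ) : EReal) = c := EReal.coe_toReal hc hcb
    by_cases hdt : d = ⊤
    · exact ⟨c.toReal, c.toReal + 1, by linarith, hcc.ge, by simp [hdt]⟩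
    · have hdd : ((d.toReal : ℝ) : EReal) = d := EReal.coe_toReal hdt hd
      refine ⟨c.toReal, d.toReal, ?_, hcc.ge, hdd.le⟩
      exact EReal.coe_lt_coe_iff.mp (by rw [hcc, hdd]; exact hcd)

lemma ereal_lb {c : EReal} {x y s t : ℝ} (hx : c ≤ (x:EReal)) (hy : c ≤ (y:EReal))
    (hs : 0 ≤ s) (ht : 0 ≤ t) (hst : s + t = 1) : c ≤ ((s*x + t*y : ℝ) : EReal) := by
  have hseq : s = 1 - t := by linarith
  subst hseq
  rcases le_total x y with h | h
  · exact hx.trans (EReal.coe_le_coe_iff.mpr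
      (by nlinarith [mul_nonneg ht (sub_nonneg.mpr h)]))
  · exact hy.trans (EReal.coe_le_coe_iff.mpr
      (by nlinarith [mul_nonneg ht (sub_nonneg.mpr h)]))

lemma ereal_ub {c : EReal} {x y s t : ℝ} (hx : (x:EReal) ≤ c) (hy : (y:EReal) ≤ c)
    (hs : 0 ≤ s) (ht : 0 ≤ t) (hst : s + t = 1) : ((s*x + t*y : ℝ) : EReal) ≤ c := by
  have hseq : s = 1 - t := by linarith
  subst hseq
  rcases le_total x y with h | h
  · exact le_trans (EReal.coe_le_coe_iff.mpr
      (by nlinarith [mul_nonneg ht (sub_nonneg.mpr h)])) hy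
  · exact le_trans (EReal.coe_le_coe_iff.mpr
      (by nlinarith [mul_nonneg ht (sub_nonneg.mpr h)])) hx

lemma snd_fix {p q : ℕ} {K : Set (EuclideanSpace ℝ (Fin p) × EuclideanSpace ℝ (Fin q))}
    {P : _ → _} (hP : IsMetricProjection K P) (z)
    (hmem : ((P z).1, z.2) ∈ K) : (P z).2 = z.2 := by
  have h := (hP z).2 _ hmem
  simp only [sub_self, norm_zero] at h
  have h1 : ‖z.2 - (P z).2‖^2 ≤ 0 := by nlinarith
  have h2 : ‖z.2 - (P z).2‖ = 0 := by nlinarith [norm_nonneg (z.2 - (P z).2)]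
  exact (sub_eq_zero.mp (norm_eq_zero.mp h2)).symm

lemma fst_fix {p q : ℕ} {K : Set (EuclideanSpace ℝ (Fin p) × EuclideanSpace ℝ (Fin q))}
    {P : _ → _} (hP : IsMetricProjection K P) (z)
    (hmem : (z.1, (P z).2) ∈ K) : (P z).1 = z.1 := by
  have h := (hP z).2 _ hmem
  simp only [sub_self, norm_zero] at h
  have h1 : ‖z.1 - (P z).1‖^2 ≤ 0 := by nlinarith
  have h2 : ‖z.1 - (P z).1‖ = 0 := by nlinarith [norm_nonneg (z.1 - (P z).1)]
  exact (sub_eq_zero.mp (norm_eq_zero.mp h2)).symm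

lemma fst_coord {p q : ℕ} {K : Set (EuclideanSpace ℝ (Fin p) × EuclideanSpace ℝ (Fin q))}
    {P : _ → _} (hP : IsMetricProjection K P) (z) (i : Fin p)
    (x' : EuclideanSpace ℝ (Fin p)) (γ : ℝ) (hγ : x' i = γ)
    (hx' : ∀ i', i' ≠ i → x' i' = (P z).1 i')
    (hmem : (x', (P z).2) ∈ K) :
    (z.1 i - (P z).1 i)^2 ≤ (z.1 i - γ)^2 := by
  subst hγ
  have h := (hP z).2 _ hmem
  have h' : ‖z.1 - (P z).1‖^2 ≤ ‖z.1 - x'‖^2 := by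
    simp only at h; linarith
  rw [euc_norm_sq, euc_norm_sq] at h'
  rw [← Finset.sum_erase_add _ _ (Finset.mem_univ i),
      ← Finset.sum_erase_add _ _ (Finset.mem_univ i)] at h'
  have heq : ∑ j ∈ Finset.univ.erase i, ((z.1 - (P z).1) j)^2
      = ∑ j ∈ Finset.univ.erase i, ((z.1 - x') j)^2 := by
    apply Finset.sum_congr rfl
    intro j hj
    have hje : x' j = (P z).1 j := hx' j (Finset.ne_of_mem_erase hj)
    simp [hje]
  have hco : ((z.1 - (P z).1) i)^2 ≤ ((z.1 - x') i)^2 := by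
    rw [heq] at h'; linarith
  simpa using hco

lemma var_ineq {n : ℕ} {C : Set (EuclideanSpace ℝ (Fin n))} (hC : Convex ℝ C)
    {u φ : EuclideanSpace ℝ (Fin n)} (hφ : φ ∈ C)
    (hmin : ∀ v ∈ C, ‖u - φ‖^2 ≤ ‖u - v‖^2) :
    ∀ v ∈ C, ⟪u - φ, v - φ⟫ ≤ 0 := by
  intro v hv
  by_contra hpos
  push_neg at hpos
  have hvφ : v - φ ≠ 0 := by
    intro h0
    rw [h0, inner_zero_right] at hpos
    exact lt_irrefl 0 hpos
  have hnv : 0 < ‖v - φ‖^2 := pow_pos (norm_pos_iff.mpr hvφ) 2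
  set I : ℝ := inner ℝ (u - φ) (v - φ) with hI
  set tmin : ℝ := min 1 (I / ‖v - φ‖^2) with htm
  have ht0 : 0 < tmin := lt_min one_pos (div_pos hpos hnv)
  have ht1 : tmin ≤ 1 := min_le_left _ _
  have hmem : φ + tmin • (v - φ) ∈ C := by
    have hh := hC hφ hv (by linarith : (0:ℝ) ≤ 1 - tmin) ht0.le (by ring)
    convert hh using 1
    module
  have h := hmin _ hmem
  have hexp : ‖u - (φ + tmin • (v - φ))‖^2
      = ‖u - φ‖^2 - 2 * (tmin * I) + tmin^2 * ‖v - φ‖^2 := by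
    have hrw : u - (φ + tmin • (v - φ)) = (u - φ) - tmin • (v - φ) := by module
    rw [hrw, norm_sub_sq_real, real_inner_smul_right, norm_smul,
      Real.norm_eq_abs, mul_pow, sq_abs, hI]
  rw [hexp] at h
  have h2 : 2 * I ≤ tmin * ‖v - φ‖^2 := by nlinarith
  have h3 : tmin * ‖v - φ‖^2 ≤ I := by
    have hmr := min_le_right 1 (I / ‖v - φ‖^2)
    calc tmin * ‖v - φ‖^2 ≤ (I / ‖v - φ‖^2) * ‖v - φ‖^2 :=
          mul_le_mul_of_nonneg_right hmr hnv.le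
      _ = I := div_mul_cancel₀ _ hnv.ne'
  linarith

lemma proj_nonexp {n : ℕ} {C : Set (EuclideanSpace ℝ (Fin n))} (hC : Convex ℝ C)
    {u₁ u₂ φ₁ φ₂ : EuclideanSpace ℝ (Fin n)} (hφ₁ : φ₁ ∈ C) (hφ₂ : φ₂ ∈ C)
    (hm₁ : ∀ v ∈ C, ‖u₁ - φ₁‖^2 ≤ ‖u₁ - v‖^2)
    (hm₂ : ∀ v ∈ C, ‖u₂ - φ₂‖^2 ≤ ‖u₂ - v‖^2) :
    ‖φ₂ - φ₁‖ ≤ ‖u₂ - u₁‖ := by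
  have h1 := var_ineq hC hφ₁ hm₁ φ₂ hφ₂
  have h2 := var_ineq hC hφ₂ hm₂ φ₁ hφ₁
  have key : ‖φ₂ - φ₁‖^2 ≤ ⟪u₂ - u₁, φ₂ - φ₁⟫ := by
    have hsplit : u₂ - u₁ = (u₂ - φ₂) + (φ₂ - φ₁) + (φ₁ - u₁) := by module
    rw [hsplit, inner_add_left, inner_add_left, real_inner_self_eq_norm_sq]
    have e1 : ⟪u₂ - φ₂, φ₂ - φ₁⟫ = -⟪u₂ - φ₂, φ₁ - φ₂⟫ := by
      rw [show φ₂ - φ₁ = -(φ₁ - φ₂) by module, inner_neg_right]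
    have e2 : ⟪φ₁ - u₁, φ₂ - φ₁⟫ = -⟪u₁ - φ₁, φ₂ - φ₁⟫ := by
      rw [show φ₁ - u₁ = -(u₁ - φ₁) by module, inner_neg_left]
    rw [e1, e2]
    linarith
  have hcs := real_inner_le_norm (u₂ - u₁) (φ₂ - φ₁)
  nlinarith [norm_nonneg (φ₂ - φ₁), norm_nonneg (u₂ - u₁)]

/-- For a box `K = B × C ⊆ ℝ^p × ℝ^q` with `B = ×_{i}[a_i, b_i]`,
`C = ×_{j}[c_j, d_j]` (endpoints possibly infinite, `a_i < b_i`,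
`c_j < d_j`), the projection `P_K` is `L`-isotone for the extended Lorentz
cone `L` if and only if `B = ℝ^p`. -/
theorem stmt17 (p q : ℕ) (hp : 0 < p) (hq : 0 < q)
    (a b : Fin p → EReal) (c d : Fin q → EReal)
    (ha : ∀ i, a i ≠ ⊤) (hb : ∀ i, b i ≠ ⊥) (hab : ∀ i, a i < b i)
    (hc : ∀ j, c j ≠ ⊤) (hd : ∀ j, d j ≠ ⊥) (hcd : ∀ j, c j < d j)
    (B : Set (EuclideanSpace ℝ (Fin p)))
    (hB : B = {x | ∀ i, a i ≤ (x i : EReal) ∧ (x i : EReal) ≤ b i})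
    (C : Set (EuclideanSpace ℝ (Fin q)))
    (hC : C = {v | ∀ j, c j ≤ (v j : EReal) ∧ (v j : EReal) ≤ d j})
    (P : EuclideanSpace ℝ (Fin p) × EuclideanSpace ℝ (Fin q) →
      EuclideanSpace ℝ (Fin p) × EuclideanSpace ℝ (Fin q))
    (hP : IsMetricProjection (B ×ˢ C) P) :
    (∀ z w, w - z ∈ extendedLorentzCone p q →
      P w - P z ∈ extendedLorentzCone p q) ↔
    B = (Set.univ : Set (EuclideanSpace ℝ (Fin p))) := by
  constructor
  · intro hiso
    -- choose two distinct points of C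
    choose r r' hlt hcle hled using fun j => exists_two (c j) (d j) (hc j) (hd j) (hcd j)
    set j₀ : Fin q := ⟨0, hq⟩ with hj₀
    set v : EuclideanSpace ℝ (Fin q) := WithLp.toLp 2 (fun j => r j) with hv
    set v' : EuclideanSpace ℝ (Fin q) := WithLp.toLp 2 (fun j => if j = j₀ then r' j else r j) with hv'
    have hvapp : ∀ j, v j = r j := fun _ => rfl
    have hv'app : ∀ j, v' j = if j = j₀ then r' j else r j := fun _ => rfl
    have hvC : v ∈ C := by
      rw [hC]
      intro j
      rw [hvapp j]
      exact ⟨hcle j, le_trans (EReal.coe_le_coe_iff.mpr (hlt j).le) (hled j)⟩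
    have hv'C : v' ∈ C := by
      rw [hC]
      intro j
      rw [hv'app j]
      by_cases hj : j = j₀
      · rw [if_pos hj]
        exact ⟨(hcle j).trans (EReal.coe_le_coe_iff.mpr (hlt j).le), hled j⟩
      · rw [if_neg hj]
        exact ⟨hcle j, (EReal.coe_le_coe_iff.mpr (hlt j).le).trans (hled j)⟩
    have hne : v' - v ≠ 0 := by
      intro h0
      have h1 : (v' - v) j₀ = (0 : EuclideanSpace ℝ (Fin q)) j₀ := by rw [h0]
      have h2 : v' j₀ - v j₀ = 0 := by simpa using h1
      have h3 : v' j₀ = r' j₀ := by rw [hv'app j₀, if_pos rfl]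
      have h4 : v j₀ = r j₀ := hvapp j₀
      rw [h3, h4] at h2
      exact (hlt j₀).ne' (sub_eq_zero.mp h2)
    set t : ℝ := ‖v' - v‖ with htdef
    have ht : 0 < t := norm_pos_iff.mpr hne
    -- key claim
    have key : ∀ i, a i = ⊥ ∧ b i = ⊤ := by
      intro i
      constructor
      · by_contra hai
        have hαa : ((a i).toReal : EReal) = a i := EReal.coe_toReal (ha i) hai
        set α : ℝ := (a i).toReal with hα
        set z : EuclideanSpace ℝ (Fin p) × EuclideanSpace ℝ (Fin q) :=
          ((WithLp.toLp 2 (fun _ => α - t) : EuclideanSpace ℝ (Fin p)), v) with hz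
        set w : EuclideanSpace ℝ (Fin p) × EuclideanSpace ℝ (Fin q) :=
          ((WithLp.toLp 2 (fun _ => α) : EuclideanSpace ℝ (Fin p)), v') with hw
        have hL : w - z ∈ extendedLorentzCone p q := by
          intro i'
          show ‖(w - z).2‖ ≤ (w - z).1 i'
          have h1 : (w - z).1 i' = α - (α - t) := by simp [hw, hz]
          have h2 : (w - z).2 = v' - v := rfl
          rw [h1, h2]
          linarith
        have hPz2 : (P z).2 = v := snd_fix hP z (Set.mk_mem_prod (hP z).1.1 hvC)
        have hPw2 : (P w).2 = v' := snd_fix hP w (Set.mk_mem_prod (hP w).1.1 hv'C)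
        have hαmem : ∀ g : EuclideanSpace ℝ (Fin p), g ∈ B →
            ((WithLp.toLp 2 (fun i' => if i' = i then α else g i') : EuclideanSpace ℝ (Fin p))) ∈ B := by
          intro g hg
          rw [hB] at hg ⊢
          intro i'
          by_cases hi' : i' = i
          · simp only [WithLp.ofLp_toLp, hi', if_pos rfl]
            exact ⟨hαa.ge, hαa.le.trans (hab i).le⟩
          · simp only [WithLp.ofLp_toLp, if_neg hi']
            exact hg i'
        have hPw1 : (P w).1 i = α := by
          have hsq : (α - (P w).1 i)^2 ≤ (α - α)^2 :=
            fst_coord hP w i (WithLp.toLp 2 (fun i' => if i' = i then α else (P w).1 i')) α (by simp)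
              (fun i' h => if_neg h) (Set.mk_mem_prod (hαmem _ (hP w).1.1) (hP w).1.2)
          have h0 : (α - (P w).1 i)^2 = 0 :=
            le_antisymm (by simpa using hsq) (sq_nonneg _)
          have h1 : α - (P w).1 i = 0 := pow_eq_zero_iff two_ne_zero |>.mp h0
          linarith
        have hPz1 : (P z).1 i = α := by
          have hge : α ≤ (P z).1 i := by
            have hm := (hP z).1.1
            rw [hB] at hm
            have := (hm i).1
            rw [← hαa] at this
            exact EReal.coe_le_coe_iff.mp this
          have hsq : (α - t - (P z).1 i)^2 ≤ (α - t - α)^2 :=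
            fst_coord hP z i (WithLp.toLp 2 (fun i' => if i' = i then α else (P z).1 i')) α (by simp)
              (fun i' h => if_neg h) (Set.mk_mem_prod (hαmem _ (hP z).1.1) (hP z).1.2)
          have hle : (P z).1 i ≤ α := by nlinarith [sq_nonneg ((P z).1 i - α)]
          linarith
        have hcon := hiso z w hL i
        have hs2 : (P w - P z).2 = v' - v := by
          show (P w).2 - (P z).2 = v' - v
          rw [hPz2, hPw2]
        have hs1 : (P w - P z).1 i = 0 := by
          show (P w).1 i - (P z).1 i = 0
          rw [hPw1, hPz1, sub_self]
        rw [show ‖(P w - P z).2‖ = t by rw [hs2], hs1] at hcon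
        linarith
      · by_contra hbi
        have hβb : ((b i).toReal : EReal) = b i := EReal.coe_toReal hbi (hb i)
        set β : ℝ := (b i).toReal with hβ
        set z : EuclideanSpace ℝ (Fin p) × EuclideanSpace ℝ (Fin q) :=
          ((WithLp.toLp 2 (fun _ => β) : EuclideanSpace ℝ (Fin p)), v) with hz
        set w : EuclideanSpace ℝ (Fin p) × EuclideanSpace ℝ (Fin q) :=
          ((WithLp.toLp 2 (fun _ => β + t) : EuclideanSpace ℝ (Fin p)), v') with hw
        have hL : w - z ∈ extendedLorentzCone p q := by
          intro i'
          show ‖(w - z).2‖ ≤ (w - z).1 i'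
          have h1 : (w - z).1 i' = β + t - β := by simp [hw, hz]
          have h2 : (w - z).2 = v' - v := rfl
          rw [h1, h2]
          linarith
        have hPz2 : (P z).2 = v := snd_fix hP z (Set.mk_mem_prod (hP z).1.1 hvC)
        have hPw2 : (P w).2 = v' := snd_fix hP w (Set.mk_mem_prod (hP w).1.1 hv'C)
        have hβmem : ∀ g : EuclideanSpace ℝ (Fin p), g ∈ B →
            ((WithLp.toLp 2 (fun i' => if i' = i then β else g i') : EuclideanSpace ℝ (Fin p))) ∈ B := by
          intro g hg
          rw [hB] at hg ⊢
          intro i'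
          by_cases hi' : i' = i
          · simp only [WithLp.ofLp_toLp, hi', if_pos rfl]
            exact ⟨hβb.ge.trans' (hab i).le, hβb.le⟩
          · simp only [WithLp.ofLp_toLp, if_neg hi']
            exact hg i'
        have hPz1 : (P z).1 i = β := by
          have hsq : (β - (P z).1 i)^2 ≤ (β - β)^2 :=
            fst_coord hP z i (WithLp.toLp 2 (fun i' => if i' = i then β else (P z).1 i')) β (by simp)
              (fun i' h => if_neg h) (Set.mk_mem_prod (hβmem _ (hP z).1.1) (hP z).1.2)
          have h0 : (β - (P z).1 i)^2 = 0 :=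
            le_antisymm (by simpa using hsq) (sq_nonneg _)
          have h1 : β - (P z).1 i = 0 := pow_eq_zero_iff two_ne_zero |>.mp h0
          linarith
        have hPw1 : (P w).1 i = β := by
          have hle : (P w).1 i ≤ β := by
            have hm := (hP w).1.1
            rw [hB] at hm
            have := (hm i).2
            rw [← hβb] at this
            exact EReal.coe_le_coe_iff.mp this
          have hsq : (β + t - (P w).1 i)^2 ≤ (β + t - β)^2 :=
            fst_coord hP w i (WithLp.toLp 2 (fun i' => if i' = i then β else (P w).1 i')) β (by simp)
              (fun i' h => if_neg h) (Set.mk_mem_prod (hβmem _ (hP w).1.1) (hP w).1.2)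
          have hge : β ≤ (P w).1 i := by nlinarith [sq_nonneg (β - (P w).1 i)]
          linarith
        have hcon := hiso z w hL i
        have hs2 : (P w - P z).2 = v' - v := by
          show (P w).2 - (P z).2 = v' - v
          rw [hPz2, hPw2]
        have hs1 : (P w - P z).1 i = 0 := by
          show (P w).1 i - (P z).1 i = 0
          rw [hPw1, hPz1, sub_self]
        rw [show ‖(P w - P z).2‖ = t by rw [hs2], hs1] at hcon
        linarith
    rw [hB]
    ext x
    simp only [Set.mem_setOf_eq, Set.mem_univ, iff_true]
    intro i
    rw [(key i).1, (key i).2]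
    exact ⟨bot_le, le_top⟩
  · intro hBu z w hzw
    have hCconv : Convex ℝ C := by
      rw [hC]
      intro x hx y hy s u hs hu hsu j
      have happ : ((s • x + u • y : EuclideanSpace ℝ (Fin q)) j : ℝ) = s * x j + u * y j := by
        simp
      rw [happ]
      exact ⟨ereal_lb (hx j).1 (hy j).1 hs hu hsu, ereal_ub (hx j).2 (hy j).2 hs hu hsu⟩
    have hfix : ∀ x, (P x).1 = x.1 := by
      intro x
      exact fst_fix hP x (by rw [hBu]; exact Set.mk_mem_prod trivial (hP x).1.2)
    have hmin : ∀ x, ∀ u ∈ C, ‖x.2 - (P x).2‖^2 ≤ ‖x.2 - u‖^2 := by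
      intro x u hu
      have h := (hP x).2 (x.1, u) (by rw [hBu]; exact Set.mk_mem_prod trivial hu)
      simp only [hfix x, sub_self, norm_zero] at h
      nlinarith
    have hnon : ‖(P w).2 - (P z).2‖ ≤ ‖w.2 - z.2‖ :=
      proj_nonexp hCconv (hP z).1.2 (hP w).1.2 (hmin z) (hmin w)
    intro i
    have hL := hzw i
    have h1 : (P w - P z).1 i = w.1 i - z.1 i := by
      show (P w).1 i - (P z).1 i = w.1 i - z.1 i
      rw [hfix z, hfix w]
    have h2 : (P w - P z).2 = (P w).2 - (P z).2 := rfl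
    have h3 : (w - z).1 i = w.1 i - z.1 i := rfl
    have h4 : (w - z).2 = w.2 - z.2 := rfl
    show ‖(P w - P z).2‖ ≤ (P w - P z).1 i
    rw [h1, h2]
    rw [h3, h4] at hL
    exact hnon.trans hL
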